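/- Let X be any n×p real matrix and let R satisfy 1 ≤ R ≤ min(n,p) and R < n. Suppose each loss function ρ_ij: ℝ → [0,∞) is symmetric and satisfies ρ_ij(z) → ∞ as |z| → ∞, and the penalty functions P₁, P₂ are bounded above on the unit spheres S^{n−1} and S^{p−1}, respectively. Then for the ELSVD left singular subspace function U_R^ρ (for any selection of minimizers), there exists k ≤ R+1 such that (k,1) ∈ BP(U_R^ρ;X). In particular, bp_row(U_R^ρ;X) ≤ R+1 and bp_col(U_R^ρ;X) = 1. -/

import Mathlib

noncomputable section
open scoped BigOperators
open Matrix

abbrev E (k : ℕ) := EuclideanSpace ℝ (Fin k)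

noncomputable def canonAngle {k : ℕ} (V W : Submodule ℝ (E k)) : ℝ :=
  Real.arccos (sInf {r : ℝ | ∃ w ∈ W, ‖w‖ = 1 ∧
    r = ‖(V.orthogonalProjectionOnto w : E k)‖})

lemma arccos_antitone : Antitone Real.arccos := fun x y h => by
  rw [Real.arccos_eq_pi_div_two_sub_arcsin, Real.arccos_eq_pi_div_two_sub_arcsin]
  linarith [Real.monotone_arcsin h]

lemma exists_thresh {f : ℝ → ℝ} (hf : Filter.Tendsto f (Filter.cocompact ℝ) Filter.atTop)
    (K : ℝ) : ∃ T, 0 ≤ T ∧ ∀ z, f z ≤ K → |z| ≤ T := by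
  have h : {z : ℝ | K + 1 ≤ f z} ∈ Filter.cocompact ℝ :=
    hf.eventually (Filter.eventually_ge_atTop (K + 1))
  rw [Filter.mem_cocompact] at h
  obtain ⟨S, hS, hSc⟩ := h
  obtain ⟨r, hr⟩ := hS.isBounded.subset_closedBall 0
  refine ⟨max r 0, le_max_right _ _, fun z hz => ?_⟩
  by_cases hzS : z ∈ S
  · have := hr hzS
    rw [Metric.mem_closedBall, Real.dist_eq, sub_zero] at this
    exact this.trans (le_max_left _ _)
  · exact absurd (hSc hzS) (by simp only [Set.mem_setOf_eq]; linarith)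

lemma exists_ker_ne_zero {V W : Type*} [AddCommGroup V] [Module ℝ V] [AddCommGroup W]
    [Module ℝ W] [FiniteDimensional ℝ V] [FiniteDimensional ℝ W]
    (L : V →ₗ[ℝ] W) (h : Module.finrank ℝ W < Module.finrank ℝ V) :
    ∃ x : V, x ≠ 0 ∧ L x = 0 := by
  by_contra hc
  push_neg at hc
  have hinj : Function.Injective L := by
    rw [← LinearMap.ker_eq_bot, Submodule.eq_bot_iff]
    intro x hx
    by_contra hx0
    exact (hc x hx0) hx
  exact absurd (LinearMap.finrank_le_finrank_of_injective hinj) (by omega)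

lemma canonAngle_le_pi_div_two {k : ℕ} (V W : Submodule ℝ (E k))
    (hW : ∃ w ∈ W, ‖w‖ = 1) : canonAngle V W ≤ Real.pi / 2 := by
  apply Real.arccos_le_pi_div_two.mpr
  apply le_csInf
  · obtain ⟨w, hw, hw1⟩ := hW; exact ⟨_, w, hw, hw1, rfl⟩
  · rintro r ⟨w, hw, hw1, rfl⟩; positivity

lemma canonAngle_ge {k : ℕ} (V W : Submodule ℝ (E k)) {w : E k} (hw : w ∈ W)
    (hw1 : ‖w‖ = 1) :
    Real.arccos ‖(Submodule.orthogonalProjectionOnto V w : E k)‖ ≤ canonAngle V W := by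
  apply arccos_antitone
  apply csInf_le
  · exact ⟨0, by rintro r ⟨w', _, _, rfl⟩; positivity⟩
  · exact ⟨w, hw, hw1, rfl⟩

lemma canonAngle_self {k : ℕ} (W : Submodule ℝ (E k)) (hW : ∃ w ∈ W, ‖w‖ = 1) :
    canonAngle W W = 0 := by
  have hset : {r : ℝ | ∃ w ∈ W, ‖w‖ = 1 ∧ r = ‖(Submodule.orthogonalProjectionOnto W w : E k)‖}
      = {1} := by
    ext r
    constructor
    · rintro ⟨w, hw, hw1, rfl⟩
      simp [Submodule.coe_orthogonalProjectionOnto_apply, Submodule.starProjection_eq_self_iff.mpr hw, hw1]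
    · rintro rfl
      obtain ⟨w, hw, hw1⟩ := hW
      exact ⟨w, hw, hw1, by simp [Submodule.coe_orthogonalProjectionOnto_apply, Submodule.starProjection_eq_self_iff.mpr hw, hw1]⟩
  rw [canonAngle, hset, csInf_singleton, Real.arccos_one]

lemma proj_norm_le {k R : ℕ} {u : Fin R → E k} (hu : Orthonormal ℝ u) (r₀ : Fin R)
    (w : E k) (hw : ∀ r, r ≠ r₀ → (inner ℝ (u r) w : ℝ) = 0) :
    ‖(Submodule.orthogonalProjectionOnto (Submodule.span ℝ (Set.range u)) w : E k)‖
      ≤ |(inner ℝ (u r₀) w : ℝ)| := by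
  set K := Submodule.span ℝ (Set.range u) with hK
  set Pw : E k := (Submodule.orthogonalProjectionOnto K w : E k) with hPw
  have hPwK : Pw ∈ K := SetLike.coe_mem _
  obtain ⟨a, ha⟩ := (Submodule.mem_span_range_iff_exists_fun ℝ).mp hPwK
  have horth := orthonormal_iff_ite.mp hu
  have h1 : (inner ℝ Pw w : ℝ) = ‖Pw‖ ^ 2 := by
    have h0 := K.starProjection_inner_eq_zero w Pw hPwK
    have : (inner ℝ (w - Pw) Pw : ℝ) = 0 := h0
    rw [inner_sub_left] at this
    rw [real_inner_comm]
    rw [← real_inner_self_eq_norm_sq]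
    linarith [this]
  have h2 : (inner ℝ Pw w : ℝ) = a r₀ * (inner ℝ (u r₀) w : ℝ) := by
    rw [← ha, sum_inner]
    rw [Finset.sum_eq_single r₀]
    · rw [real_inner_smul_left]
    · intro r _ hr
      rw [real_inner_smul_left, hw r hr, mul_zero]
    · intro h; exact absurd (Finset.mem_univ r₀) h
  have h3 : |a r₀| ≤ ‖Pw‖ := by
    have haa : a r₀ = (inner ℝ (u r₀) Pw : ℝ) := by
      rw [← ha, inner_sum]
      rw [Finset.sum_eq_single r₀]
      · rw [real_inner_smul_right, horth r₀ r₀, if_pos rfl, mul_one]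
      · intro r _ hr
        rw [real_inner_smul_right, horth r₀ r, if_neg (Ne.symm hr), mul_zero]
      · intro h; exact absurd (Finset.mem_univ r₀) h
    calc |a r₀| = |(inner ℝ (u r₀) Pw : ℝ)| := by rw [haa]
      _ ≤ ‖u r₀‖ * ‖Pw‖ := abs_real_inner_le_norm _ _
      _ = ‖Pw‖ := by rw [hu.1 r₀, one_mul]
  rcases eq_or_lt_of_le (norm_nonneg Pw) with h0 | h0
  · rw [← h0]; positivity
  · have : ‖Pw‖ ^ 2 ≤ ‖Pw‖ * |(inner ℝ (u r₀) w : ℝ)| := by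
      rw [← h1, h2]
      calc a r₀ * (inner ℝ (u r₀) w : ℝ) ≤ |a r₀ * (inner ℝ (u r₀) w : ℝ)| := le_abs_self _
        _ = |a r₀| * |(inner ℝ (u r₀) w : ℝ)| := abs_mul _ _
        _ ≤ ‖Pw‖ * |(inner ℝ (u r₀) w : ℝ)| :=
            mul_le_mul_of_nonneg_right h3 (abs_nonneg _)
    nlinarith

lemma exists_unit_orth (n R : ℕ) (hRn : R + 1 ≤ n) (uX : Fin R → E n) :
    ∃ c : E n, ‖c‖ = 1 ∧ (∀ i : Fin n, ¬ ((i : ℕ) < R + 1) → c i = 0) ∧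
      ∀ r, (inner ℝ (uX r) c : ℝ) = 0 := by
  classical
  set g : Fin (R + 1) → Fin n := fun i => ⟨i, lt_of_lt_of_le i.isLt hRn⟩ with hg
  have hginj : Function.Injective g := by
    intro a b hab
    simp only [hg, Fin.mk.injEq] at hab
    exact Fin.ext hab
  have key : ∀ f : Fin n → ℝ, (∀ i : Fin n, ¬ ((i : ℕ) < R + 1) → f i = 0) →
      ∑ i, f i = ∑ j, f (g j) := by
    intro f hf
    calc ∑ i, f i = ∑ i ∈ Finset.univ.image g, f i := by
          refine (Finset.sum_subset (Finset.subset_univ _) ?_).symm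
          intro i _ hi
          refine hf i (fun hlt => hi ?_)
          exact Finset.mem_image.mpr ⟨⟨(i : ℕ), hlt⟩, Finset.mem_univ _, Fin.ext rfl⟩
      _ = ∑ j, f (g j) := Finset.sum_image (fun x _ y _ h => hginj h)
  set A : E (R + 1) →ₗ[ℝ] (Fin R → ℝ) :=
    { toFun := fun c r => ∑ i, c i * uX r (g i)
      map_add' := by
        intro x y
        funext r
        simp [add_mul, Finset.sum_add_distrib]
      map_smul' := by
        intro a x
        funext r
        simp [Finset.mul_sum, mul_assoc] } with hA
  obtain ⟨c₀, hc₀ne, hc₀⟩ := exists_ker_ne_zero A (by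
    rw [Module.finrank_fintype_fun_eq_card, finrank_euclideanSpace]
    simp)
  have hc₀norm : ‖c₀‖ ≠ 0 := norm_ne_zero_iff.mpr hc₀ne
  have hsum : ∑ j, ‖c₀ j‖ ^ 2 = ‖c₀‖ ^ 2 := by
    rw [EuclideanSpace.norm_eq, Real.sq_sqrt (by positivity)]
  set c : E n := WithLp.toLp 2 (fun i : Fin n => if h : (i : ℕ) < R + 1 then ‖c₀‖⁻¹ * c₀ ⟨i, h⟩ else 0) with hc
  have hcg : ∀ j : Fin (R + 1), c (g j) = ‖c₀‖⁻¹ * c₀ j := by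
    intro j
    have : ((g j : Fin n) : ℕ) < R + 1 := j.isLt
    rw [hc]
    simp only [PiLp.toLp_apply, this, dif_pos]
    rfl
  have hvanish : ∀ i : Fin n, ¬ ((i : ℕ) < R + 1) → c i = 0 := by
    intro i hi
    rw [hc]; simp only [PiLp.toLp_apply, hi, dif_neg, not_false_iff]
  refine ⟨c, ?_, hvanish, ?_⟩
  · rw [EuclideanSpace.norm_eq]
    have : ∑ i, ‖c i‖ ^ 2 = 1 := by
      rw [key _ (fun i hi => by rw [hvanish i hi]; simp)]
      have : ∀ j : Fin (R + 1), ‖c (g j)‖ ^ 2 = (‖c₀‖⁻¹) ^ 2 * ‖c₀ j‖ ^ 2 := by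
        intro j
        rw [hcg j, norm_mul, mul_pow]
        congr 1
        rw [norm_inv, norm_norm]
      rw [Finset.sum_congr rfl (fun j _ => this j), ← Finset.mul_sum, hsum]
      field_simp
    rw [this, Real.sqrt_one]
  · intro r
    have hinner : (inner ℝ (uX r) c : ℝ) = ∑ i, uX r i * c i := by
      simp [PiLp.inner_apply, RCLike.inner_apply, conj_trivial]
      exact Finset.sum_congr rfl (fun i _ => mul_comm _ _)
    rw [hinner, key _ (fun i hi => by rw [hvanish i hi, mul_zero])]
    have hAc : ∑ i, c₀ i * uX r (g i) = 0 := congrFun hc₀ r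
    calc ∑ j, uX r (g j) * c (g j) = ‖c₀‖⁻¹ * ∑ j, c₀ j * uX r (g j) := by
          rw [Finset.mul_sum]
          refine Finset.sum_congr rfl (fun j _ => ?_)
          rw [hcg j]; ring
      _ = 0 := by rw [hAc, mul_zero]

variable {n p m : ℕ}

def BlockCorrupt (X Z : Matrix (Fin n) (Fin p) ℝ) (k l : ℕ) : Prop :=
  ∃ (I : Finset (Fin n)) (J : Finset (Fin p)), I.card = k ∧ J.card = l ∧
    ∀ i j, (i ∉ I ∨ j ∉ J) → Z i j = X i j

def RowCorrupt (X Z : Matrix (Fin n) (Fin p) ℝ) (k : ℕ) : Prop :=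
  ∃ I : Finset (Fin n), I.card = k ∧ ∀ i ∉ I, ∀ j, Z i j = X i j

def ColCorrupt (X Z : Matrix (Fin n) (Fin p) ℝ) (l : ℕ) : Prop :=
  ∃ J : Finset (Fin p), J.card = l ∧ ∀ j ∉ J, ∀ i, Z i j = X i j

def BreaksDownBlock (V : Matrix (Fin n) (Fin p) ℝ → Submodule ℝ (E m))
    (X : Matrix (Fin n) (Fin p) ℝ) (k l : ℕ) : Prop :=
  sSup {d : ℝ | ∃ Z, BlockCorrupt X Z k l ∧ d = canonAngle (V Z) (V X)} = Real.pi / 2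

def BreaksDownRow (V : Matrix (Fin n) (Fin p) ℝ → Submodule ℝ (E m))
    (X : Matrix (Fin n) (Fin p) ℝ) (k : ℕ) : Prop :=
  sSup {d : ℝ | ∃ Z, RowCorrupt X Z k ∧ d = canonAngle (V Z) (V X)} = Real.pi / 2

def BreaksDownCol (V : Matrix (Fin n) (Fin p) ℝ → Submodule ℝ (E m))
    (X : Matrix (Fin n) (Fin p) ℝ) (l : ℕ) : Prop :=
  sSup {d : ℝ | ∃ Z, ColCorrupt X Z l ∧ d = canonAngle (V Z) (V X)} = Real.pi / 2

noncomputable def bpRow (V : Matrix (Fin n) (Fin p) ℝ → Submodule ℝ (E m))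
    (X : Matrix (Fin n) (Fin p) ℝ) : ℕ :=
  sInf {k : ℕ | 1 ≤ k ∧ k ≤ n ∧ BreaksDownRow V X k}

noncomputable def bpCol (V : Matrix (Fin n) (Fin p) ℝ → Submodule ℝ (E m))
    (X : Matrix (Fin n) (Fin p) ℝ) : ℕ :=
  sInf {l : ℕ | 1 ≤ l ∧ l ≤ p ∧ BreaksDownCol V X l}

def IsBP (V : Matrix (Fin n) (Fin p) ℝ → Submodule ℝ (E m))
    (X : Matrix (Fin n) (Fin p) ℝ) (i j : ℕ) : Prop :=
  1 ≤ i ∧ i ≤ n ∧ 1 ≤ j ∧ j ≤ p ∧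
  (∀ k l, i ≤ k → k ≤ n → j ≤ l → l ≤ p → BreaksDownBlock V X k l) ∧
  (∀ k l, 1 ≤ k → 1 ≤ l → k ≤ i → l ≤ j → (k, l) ≠ (i, j) → ¬ BreaksDownBlock V X k l)

/-- The ELSVD objective `ρ(Y - d·u·vᵀ) + P₁(u) + P₂(v)`. -/
noncomputable def elsvdObj {n p : ℕ} (ρ : Fin n → Fin p → ℝ → ℝ)
    (P1 : E n → ℝ) (P2 : E p → ℝ) (Y : Matrix (Fin n) (Fin p) ℝ)
    (d : ℝ) (u : E n) (v : E p) : ℝ :=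
  (∑ i, ∑ j, ρ i j (Y i j - d * u i * v j)) + P1 u + P2 v

/-- `(d, u, v)` is a sequence of ELSVD triples for `Y`: for each `r`, the triple
`(d r, u r, v r)` minimizes the ELSVD objective over `d' ≥ 0` and unit vectors `u'`, `v'`
orthogonal to the previously obtained singular vectors. -/
def IsELSVD {n p : ℕ} (ρ : Fin n → Fin p → ℝ → ℝ) (P1 : E n → ℝ) (P2 : E p → ℝ)
    (R : ℕ) (Y : Matrix (Fin n) (Fin p) ℝ)
    (d : Fin R → ℝ) (u : Fin R → E n) (v : Fin R → E p) : Prop :=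
  ∀ r : Fin R,
    0 ≤ d r ∧ ‖u r‖ = 1 ∧ ‖v r‖ = 1 ∧
    (∀ s : Fin R, s < r → (inner ℝ (u s) (u r) : ℝ) = 0 ∧ (inner ℝ (v s) (v r) : ℝ) = 0) ∧
    ∀ (d' : ℝ) (u' : E n) (v' : E p), 0 ≤ d' → ‖u'‖ = 1 → ‖v'‖ = 1 →
      (∀ s : Fin R, s < r → (inner ℝ (u s) u' : ℝ) = 0 ∧ (inner ℝ (v s) v' : ℝ) = 0) →
      elsvdObj ρ P1 P2 Y (d r) (u r) (v r) ≤ elsvdObj ρ P1 P2 Y d' u' v'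


lemma elsvd_orthonormal {n p R : ℕ} {ρ : Fin n → Fin p → ℝ → ℝ} {P1 : E n → ℝ} {P2 : E p → ℝ}
    {Y : Matrix (Fin n) (Fin p) ℝ} {d : Fin R → ℝ} {u : Fin R → E n} {v : Fin R → E p}
    (h : IsELSVD ρ P1 P2 R Y d u v) : Orthonormal ℝ u := by
  rw [orthonormal_iff_ite]
  intro i j
  rcases lt_trichotomy i j with hij | hij | hij
  · rw [if_neg (ne_of_lt hij)]; exact ((h j).2.2.2.1 i hij).1
  · subst hij
    rw [if_pos rfl, real_inner_self_eq_norm_sq, (h i).2.1]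
    norm_num
  · rw [if_neg (ne_of_gt hij), real_inner_comm]
    exact ((h i).2.2.2.1 j hij).1

set_option maxHeartbeats 1000000 in
/-- for the ELSVD left singular subspace function `U_R^ρ` (any selection of
minimizers), with each `ρ_ij` nonnegative, symmetric and diverging as `|z| → ∞`, and
penalties bounded above on the unit spheres, there is `k ≤ R+1` with `(k,1) ∈ BP(U_R^ρ;X)`;
in particular `bp_row(U_R^ρ;X) ≤ R+1` and `bp_col(U_R^ρ;X) = 1`. -/
theorem stmt6 {n p : ℕ} (R : ℕ) (hR1 : 1 ≤ R) (hRmin : R ≤ min n p) (hRn : R < n)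
    (ρ : Fin n → Fin p → ℝ → ℝ)
    (hρnonneg : ∀ i j z, 0 ≤ ρ i j z)
    (hρsymm : ∀ i j z, ρ i j (-z) = ρ i j z)
    (hρinf : ∀ i j, Filter.Tendsto (ρ i j) (Filter.cocompact ℝ) Filter.atTop)
    (P1 : E n → ℝ) (P2 : E p → ℝ)
    (hP1 : ∃ B1 : ℝ, ∀ u : E n, ‖u‖ = 1 → P1 u ≤ B1)
    (hP2 : ∃ B2 : ℝ, ∀ v : E p, ‖v‖ = 1 → P2 v ≤ B2)
    (U : Matrix (Fin n) (Fin p) ℝ → Submodule ℝ (E n))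
    (hU : ∀ Y, ∃ (d : Fin R → ℝ) (u : Fin R → E n) (v : Fin R → E p),
      IsELSVD ρ P1 P2 R Y d u v ∧ U Y = Submodule.span ℝ (Set.range u))
    (X : Matrix (Fin n) (Fin p) ℝ) :
    (∃ k ≤ R + 1, IsBP U X k 1) ∧
    bpRow U X ≤ R + 1 ∧ bpCol U X = 1 := by
  classical
  obtain ⟨B1, hB1⟩ := hP1
  obtain ⟨B2, hB2⟩ := hP2
  have hRp : R ≤ p := le_trans hRmin (min_le_right n p)
  have hp1 : 1 ≤ p := le_trans hR1 hRp
  have hn1 : 1 ≤ n := by omega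
  have hRn' : R + 1 ≤ n := hRn
  have hR0 : 0 < R := hR1
  set r₀ : Fin R := ⟨0, hR0⟩ with hr₀def
  set j₀ : Fin p := ⟨0, hp1⟩ with hj₀def
  obtain ⟨dX, uX, vX, hX, hUX⟩ := hU X
  have honX : Orthonormal ℝ uX := elsvd_orthonormal hX
  have huX1 : ‖uX r₀‖ = 1 := (hX r₀).2.1
  have hwXmem : uX r₀ ∈ U X := by
    rw [hUX]; exact Submodule.subset_span ⟨r₀, rfl⟩
  have hUXunit : ∃ w ∈ U X, ‖w‖ = 1 := ⟨uX r₀, hwXmem, huX1⟩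
  have hvac : ∀ s : Fin R, ¬ (s < r₀) := by
    intro s hs
    rw [hr₀def, Fin.lt_def] at hs
    exact Nat.not_lt_zero _ hs
  -- uniform lower bound on penalties at unit vectors
  set SX : ℝ := ∑ i, ∑ j, ρ i j (X i j) with hSXdef
  set m0 : ℝ := elsvdObj ρ P1 P2 X (dX r₀) (uX r₀) (vX r₀) - SX with hm0def
  have hm0 : ∀ (u' : E n) (v' : E p), ‖u'‖ = 1 → ‖v'‖ = 1 → m0 ≤ P1 u' + P2 v' := by
    intro u' v' hu' hv'
    have hmin := (hX r₀).2.2.2.2 0 u' v' le_rfl hu' hv'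
      (fun s hs => absurd hs (hvac s))
    have hobj : elsvdObj ρ P1 P2 X 0 u' v' = SX + P1 u' + P2 v' := by
      rw [elsvdObj, hSXdef]
      simp
    rw [hobj] at hmin
    rw [hm0def]
    linarith
  -- fixed objects for the corruption
  obtain ⟨c, hcnorm, hcvanish, hcorth⟩ := exists_unit_orth n R hRn' uX
  have hcspan : ∀ w ∈ U X, (inner ℝ c w : ℝ) = 0 := by
    intro w hw
    rw [hUX] at hw
    induction hw using Submodule.span_induction with
    | mem x hx =>
        obtain ⟨r, rfl⟩ := hx
        rw [real_inner_comm]; exact hcorth r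
    | zero => simp
    | add x y _ _ hx hy => rw [inner_add_right, hx, hy, add_zero]
    | smul a x _ hx => rw [real_inner_smul_right, hx, mul_zero]
  set g : Fin (R + 1) → Fin n := fun i => ⟨i, lt_of_lt_of_le i.isLt hRn'⟩ with hgdef
  have hginj : Function.Injective g := by
    intro a b hab
    rw [hgdef, Fin.mk.injEq] at hab
    exact Fin.ext hab
  set I : Finset (Fin n) := Finset.univ.image g with hIdef
  have hIcard : I.card = R + 1 := by
    rw [hIdef, Finset.card_image_of_injective _ hginj, Finset.card_univ, Fintype.card_fin]
  have hImem : ∀ i : Fin n, (i : ℕ) < R + 1 → i ∈ I := by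
    intro i hi
    rw [hIdef]
    exact Finset.mem_image.mpr ⟨⟨(i : ℕ), hi⟩, Finset.mem_univ _, Fin.ext rfl⟩
  -- the set of achievable angles for (R+1, 1) corruptions
  have hangle_le : ∀ Z, canonAngle (U Z) (U X) ≤ Real.pi / 2 :=
    fun Z => canonAngle_le_pi_div_two _ _ hUXunit
  have hXself : ∀ k l, k ≤ n → l ≤ p → BlockCorrupt X X k l := by
    intro k l hk hl
    obtain ⟨I', _, hI'⟩ := Finset.exists_subset_card_eq
      (s := (Finset.univ : Finset (Fin n))) (by simpa using hk)
    obtain ⟨J', _, hJ'⟩ := Finset.exists_subset_card_eq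
      (s := (Finset.univ : Finset (Fin p))) (by simpa using hl)
    exact ⟨I', J', hI', hJ', fun i j _ => rfl⟩
  have key : ∀ δ : ℝ, 0 < δ → ∃ ang : ℝ,
      (∃ Z, BlockCorrupt X Z (R+1) 1 ∧ ang = canonAngle (U Z) (U X)) ∧
      Real.arccos δ ≤ ang := by
    intro δ hδ
    set e : E p := EuclideanSpace.single j₀ (1:ℝ) with hedef
    have henorm : ‖e‖ = 1 := by rw [hedef, EuclideanSpace.norm_single, norm_one]
    set Wm : Matrix (Fin n) (Fin p) ℝ :=
      fun i j => if (i:ℕ) < R + 1 ∧ j = j₀ then 0 else X i j with hWmdef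
    have hWmval : ∀ i j, Wm i j = if (i:ℕ) < R + 1 ∧ j = j₀ then 0 else X i j :=
      fun i j => rfl
    set C : ℝ := (∑ i, ∑ j, ρ i j (Wm i j)) + P1 c + P2 e with hCdef
    set K : ℝ := C - m0 with hKdef
    have hthr : ∀ i : Fin n, ∃ T, 0 ≤ T ∧ ∀ z, ρ i j₀ z ≤ K → |z| ≤ T :=
      fun i => exists_thresh (hρinf i j₀) K
    choose T hT0 hTs using hthr
    set Tmax : ℝ := ∑ i, T i with hTmaxdef
    have hTmax0 : 0 ≤ Tmax := Finset.sum_nonneg (fun i _ => hT0 i)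
    have hTle : ∀ i, T i ≤ Tmax := by
      intro i
      rw [hTmaxdef]
      exact Finset.single_le_sum (f := T) (fun i _ => hT0 i) (Finset.mem_univ i)
    set BX : ℝ := ∑ i, |X i j₀| with hBXdef
    have hBX0 : 0 ≤ BX := Finset.sum_nonneg (fun i _ => abs_nonneg _)
    have hBXle : ∀ i, |X i j₀| ≤ BX := by
      intro i
      rw [hBXdef]
      exact Finset.single_le_sum (f := fun i => |X i j₀|) (fun i _ => abs_nonneg _) (Finset.mem_univ i)
    set T₂ : ℝ := Tmax + BX with hT₂def
    have hT₂0 : 0 ≤ T₂ := add_nonneg hTmax0 hBX0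
    set sc : ℝ := Real.sqrt n * T₂ with hscdef
    have hsc0 : 0 ≤ sc := mul_nonneg (Real.sqrt_nonneg _) hT₂0
    set M : ℝ := sc / δ + sc + 1 with hMdef
    have hM0 : 0 ≤ M := by positivity
    set Z : Matrix (Fin n) (Fin p) ℝ :=
      fun i j => if (i:ℕ) < R + 1 ∧ j = j₀ then M * c i else X i j with hZdef
    have hZval : ∀ i j, Z i j = if (i:ℕ) < R + 1 ∧ j = j₀ then M * c i else X i j :=
      fun i j => rfl
    have hBC : BlockCorrupt X Z (R+1) 1 := by
      refine ⟨I, {j₀}, hIcard, Finset.card_singleton _, ?_⟩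
      intro i j h
      rw [hZval, if_neg]
      rintro ⟨hi, rfl⟩
      rcases h with h | h
      · exact h (hImem i hi)
      · exact h (Finset.mem_singleton_self _)
    obtain ⟨dZ, uZ, vZ, hZel, hUZ⟩ := hU Z
    have honZ : Orthonormal ℝ uZ := elsvd_orthonormal hZel
    have huZ1 : ‖uZ r₀‖ = 1 := (hZel r₀).2.1
    have hvZ1 : ‖vZ r₀‖ = 1 := (hZel r₀).2.2.1
    set t : ℝ := dZ r₀ * vZ r₀ j₀ with htdef
    have hmin := (hZel r₀).2.2.2.2 M c e hM0 hcnorm henorm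
      (fun s' hs' => absurd hs' (hvac s'))
    have hcompval : elsvdObj ρ P1 P2 Z M c e = C := by
      rw [hCdef, elsvdObj]
      congr 1
      congr 1
      refine Finset.sum_congr rfl (fun i _ => Finset.sum_congr rfl (fun j _ => ?_))
      congr 1
      rw [hZval, hWmval, hedef]
      by_cases hj : j = j₀
      · subst hj
        rw [EuclideanSpace.single_apply, if_pos rfl]
        by_cases hi : (i:ℕ) < R + 1
        · rw [if_pos ⟨hi, rfl⟩, if_pos ⟨hi, rfl⟩]
          ring
        · rw [if_neg (fun h => hi h.1), if_neg (fun h => hi h.1),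
            hcvanish i hi]
          ring
      · rw [EuclideanSpace.single_apply, if_neg hj, if_neg (fun h => hj h.2),
          if_neg (fun h => hj h.2)]
        ring
    have hobjle : elsvdObj ρ P1 P2 Z (dZ r₀) (uZ r₀) (vZ r₀) ≤ C :=
      le_trans hmin (le_of_eq hcompval)
    have hterm : ∀ i : Fin n, ρ i j₀ (Z i j₀ - t * uZ r₀ i) ≤ K := by
      intro i
      have hP : m0 ≤ P1 (uZ r₀) + P2 (vZ r₀) := hm0 _ _ huZ1 hvZ1
      have hsum : ρ i j₀ (Z i j₀ - dZ r₀ * uZ r₀ i * vZ r₀ j₀) ≤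
          ∑ i', ∑ j', ρ i' j' (Z i' j' - dZ r₀ * uZ r₀ i' * vZ r₀ j') := by
        calc ρ i j₀ (Z i j₀ - dZ r₀ * uZ r₀ i * vZ r₀ j₀)
            ≤ ∑ j', ρ i j' (Z i j' - dZ r₀ * uZ r₀ i * vZ r₀ j') :=
              Finset.single_le_sum
                (f := fun j' => ρ i j' (Z i j' - dZ r₀ * uZ r₀ i * vZ r₀ j'))
                (fun j' _ => hρnonneg _ _ _) (Finset.mem_univ j₀)
          _ ≤ ∑ i', ∑ j', ρ i' j' (Z i' j' - dZ r₀ * uZ r₀ i' * vZ r₀ j') :=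
              Finset.single_le_sum
                (f := fun i' => ∑ j', ρ i' j' (Z i' j' - dZ r₀ * uZ r₀ i' * vZ r₀ j'))
                (fun i' _ => Finset.sum_nonneg (fun j' _ => hρnonneg _ _ _))
                (Finset.mem_univ i)
      have harg : Z i j₀ - dZ r₀ * uZ r₀ i * vZ r₀ j₀ = Z i j₀ - t * uZ r₀ i := by
        rw [htdef]; ring
      unfold elsvdObj at hobjle
      rw [harg] at hsum
      rw [hKdef]
      linarith
    have hcoord : ∀ i : Fin n, |Z i j₀ - t * uZ r₀ i| ≤ Tmax :=
      fun i => le_trans (hTs i _ (hterm i)) (hTle i)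
    have hcoord2 : ∀ i : Fin n, |t * uZ r₀ i - M * c i| ≤ T₂ := by
      intro i
      by_cases hi : (i:ℕ) < R + 1
      · have hZi : Z i j₀ = M * c i := by rw [hZval]; exact if_pos ⟨hi, rfl⟩
        have h1 := hcoord i
        rw [hZi] at h1
        rw [abs_sub_comm]
        rw [hT₂def]
        have := abs_le.mp h1
        rw [abs_le]
        constructor <;> linarith
      · have hci : c i = 0 := hcvanish i hi
        have hZi : Z i j₀ = X i j₀ := by rw [hZval]; exact if_neg (fun h => hi h.1)
        have h1 := hcoord i
        rw [hZi] at h1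
        have h2 := hBXle i
        rw [hci, mul_zero, sub_zero, hT₂def]
        have h3 := abs_le.mp h1
        have h4 := abs_le.mp h2
        rw [abs_le]
        constructor <;> linarith
    set vv : E n := t • uZ r₀ - M • c with hvvdef
    have hvvi : ∀ i, vv i = t * uZ r₀ i - M * c i := fun i => rfl
    have hvvnorm : ‖vv‖ ≤ sc := by
      rw [EuclideanSpace.norm_eq]
      have h1 : ∑ i, ‖vv i‖^2 ≤ (n:ℝ) * T₂^2 := by
        calc ∑ i, ‖vv i‖^2 ≤ ∑ _i : Fin n, T₂^2 :=
            Finset.sum_le_sum (fun i _ => by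
              rw [hvvi, Real.norm_eq_abs]
              exact pow_le_pow_left₀ (abs_nonneg _) (hcoord2 i) 2)
          _ = (n:ℝ) * T₂^2 := by
              rw [Finset.sum_const, Finset.card_univ, Fintype.card_fin, nsmul_eq_mul]
      calc Real.sqrt (∑ i, ‖vv i‖^2) ≤ Real.sqrt ((n:ℝ) * T₂^2) := Real.sqrt_le_sqrt h1
        _ = sc := by rw [hscdef, Real.sqrt_mul (Nat.cast_nonneg n), Real.sqrt_sq hT₂0]
    have hfrUX : Module.finrank ℝ (U X) = R := by
      rw [hUX, finrank_span_eq_card honX.linearIndependent, Fintype.card_fin]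
    set LZ : (U X) →ₗ[ℝ] ({r : Fin R // r ≠ r₀} → ℝ) :=
      { toFun := fun w s' => (inner ℝ (uZ s'.val) (w : E n) : ℝ)
        map_add' := by
          intro x y
          funext s'
          show (inner ℝ (uZ s'.val) ((x + y : U X) : E n) : ℝ) = _
          rw [Submodule.coe_add, inner_add_right]
          rfl
        map_smul' := by
          intro a x
          funext s'
          show (inner ℝ (uZ s'.val) ((a • x : U X) : E n) : ℝ) = _
          rw [Submodule.coe_smul, real_inner_smul_right]
          rfl } with hLZdef
    obtain ⟨w₀, hw₀ne, hw₀⟩ := exists_ker_ne_zero LZ (by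
      rw [hfrUX, Module.finrank_fintype_fun_eq_card]
      have hlt := Fintype.card_subtype_lt (p := fun r : Fin R => r ≠ r₀) (x := r₀) (by simp)
      simpa using hlt)
    have hw₀coe : ‖(w₀ : E n)‖ ≠ 0 := by
      rw [norm_ne_zero_iff]
      exact fun h => hw₀ne (Submodule.coe_eq_zero.mp h)
    set w : E n := ‖(w₀ : E n)‖⁻¹ • (w₀ : E n) with hwdef
    have hwmem : w ∈ U X := Submodule.smul_mem _ _ w₀.2
    have hwnorm : ‖w‖ = 1 := by
      rw [hwdef, norm_smul, norm_inv, norm_norm, inv_mul_cancel₀ hw₀coe]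
    have hworthZ : ∀ r : Fin R, r ≠ r₀ → (inner ℝ (uZ r) w : ℝ) = 0 := by
      intro r hr
      have h0 : (inner ℝ (uZ r) ((w₀ : E n)) : ℝ) = 0 := congrFun hw₀ ⟨r, hr⟩
      rw [hwdef, real_inner_smul_right, h0, mul_zero]
    have hworthc : (inner ℝ c w : ℝ) = 0 := hcspan w hwmem
    have hipv : (inner ℝ vv w : ℝ) = t * (inner ℝ (uZ r₀) w : ℝ) := by
      rw [hvvdef, inner_sub_left, real_inner_smul_left, real_inner_smul_left,
        hworthc, mul_zero, sub_zero]
    have habs : |t| * |(inner ℝ (uZ r₀) w : ℝ)| ≤ sc := by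
      rw [← abs_mul, ← hipv]
      calc |(inner ℝ vv w : ℝ)| ≤ ‖vv‖ * ‖w‖ := abs_real_inner_le_norm _ _
        _ = ‖vv‖ := by rw [hwnorm, mul_one]
        _ ≤ sc := hvvnorm
    have htlow : sc / δ + 1 ≤ |t| := by
      have h1 : ‖t • uZ r₀‖ = |t| := by rw [norm_smul, huZ1, mul_one, Real.norm_eq_abs]
      have h2 : ‖M • c‖ = M := by
        rw [norm_smul, hcnorm, mul_one, Real.norm_eq_abs, abs_of_nonneg hM0]
      have h4 := norm_sub_norm_le (M • c) (t • uZ r₀)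
      have h5 : ‖M • c - t • uZ r₀‖ = ‖vv‖ := by
        rw [hvvdef, ← norm_neg]
        congr 1
        abel
      rw [h5, h1, h2] at h4
      rw [hMdef] at h4
      linarith [hvvnorm]
    have hqδ : |(inner ℝ (uZ r₀) w : ℝ)| ≤ δ := by
      by_contra hq
      push_neg at hq
      have h1 : (sc / δ + 1) * |(inner ℝ (uZ r₀) w : ℝ)| ≤ sc :=
        le_trans (mul_le_mul_of_nonneg_right htlow (abs_nonneg _)) habs
      have h2 : sc / δ * δ ≤ sc / δ * |(inner ℝ (uZ r₀) w : ℝ)| :=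
        mul_le_mul_of_nonneg_left hq.le (by positivity)
      rw [div_mul_cancel₀ _ (ne_of_gt hδ)] at h2
      nlinarith
    have hproj : ‖(Submodule.orthogonalProjectionOnto (U Z) w : E n)‖ ≤ δ := by
      rw [hUZ]
      exact le_trans (proj_norm_le honZ r₀ w hworthZ) hqδ
    refine ⟨canonAngle (U Z) (U X), ⟨Z, hBC, rfl⟩, ?_⟩
    calc Real.arccos δ
        ≤ Real.arccos ‖(Submodule.orthogonalProjectionOnto (U Z) w : E n)‖ := arccos_antitone hproj
      _ ≤ canonAngle (U Z) (U X) := canonAngle_ge _ _ hwmem hwnorm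
  have hbdd : ∀ k l, BddAbove {d : ℝ | ∃ Z, BlockCorrupt X Z k l ∧
      d = canonAngle (U Z) (U X)} := by
    intro k l
    exact ⟨Real.pi / 2, by rintro d ⟨Z, _, rfl⟩; exact hangle_le Z⟩
  have hBR1 : BreaksDownBlock U X (R + 1) 1 := by
    rw [BreaksDownBlock]
    have hmemX : canonAngle (U X) (U X) ∈ {d : ℝ | ∃ Z, BlockCorrupt X Z (R+1) 1 ∧
        d = canonAngle (U Z) (U X)} := ⟨X, hXself _ _ hRn' hp1, rfl⟩
    apply le_antisymm
    · exact csSup_le ⟨_, hmemX⟩ (by rintro d ⟨Z, _, rfl⟩; exact hangle_le Z)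
    · by_contra hlt
      push_neg at hlt
      set Ssup := sSup {d : ℝ | ∃ Z, BlockCorrupt X Z (R+1) 1 ∧
        d = canonAngle (U Z) (U X)} with hSsup
      have hsup0 : 0 ≤ Ssup := le_trans (Real.arccos_nonneg _) (le_csSup (hbdd _ _) hmemX)
      set ε : ℝ := (Real.pi / 2 - Ssup) / 2 with hεdef
      have hε0 : 0 < ε := by rw [hεdef]; linarith
      have hεlt : ε < Real.pi / 2 := by
        rw [hεdef]; linarith [Real.pi_pos]
      have hδ0 : 0 < Real.sin ε :=
        Real.sin_pos_of_pos_of_lt_pi hε0 (by linarith [Real.pi_pos])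
      obtain ⟨ang, hangmem, hang⟩ := key (Real.sin ε) hδ0
      have harccos : Real.arccos (Real.sin ε) = Real.pi / 2 - ε := by
        rw [← Real.cos_pi_div_two_sub, Real.arccos_cos (by linarith) (by linarith [Real.pi_pos])]
      have hangle : ang ≤ Ssup := le_csSup (hbdd _ _) hangmem
      rw [harccos] at hang
      rw [hεdef] at hang
      linarith
  -- monotonicity in block sizes
  have hmono : ∀ k l k' l', BreaksDownBlock U X k l → k ≤ k' → k' ≤ n → l ≤ l' → l' ≤ p →
      BreaksDownBlock U X k' l' := by
    intro k l k' l' hb hkk' hk'n hll' hl'p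
    rw [BreaksDownBlock] at hb ⊢
    have hne : {d : ℝ | ∃ Z, BlockCorrupt X Z k l ∧ d = canonAngle (U Z) (U X)}.Nonempty := by
      by_contra hemp
      rw [Set.not_nonempty_iff_eq_empty] at hemp
      rw [hemp, Real.sSup_empty] at hb
      linarith [Real.pi_pos]
    have hsub : {d : ℝ | ∃ Z, BlockCorrupt X Z k l ∧ d = canonAngle (U Z) (U X)} ⊆
        {d : ℝ | ∃ Z, BlockCorrupt X Z k' l' ∧ d = canonAngle (U Z) (U X)} := by
      rintro d ⟨Z, ⟨Ia, Ja, hIa, hJa, hZc⟩, rfl⟩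
      obtain ⟨Ib, hsubIb, _, hIbcard⟩ := Finset.exists_subsuperset_card_eq (n := k')
        (Finset.subset_univ Ia) (by rw [hIa]; exact hkk') (by simpa using hk'n)
      obtain ⟨Jb, hsubJb, _, hJbcard⟩ := Finset.exists_subsuperset_card_eq (n := l')
        (Finset.subset_univ Ja) (by rw [hJa]; exact hll') (by simpa using hl'p)
      refine ⟨Z, ⟨Ib, Jb, hIbcard, hJbcard, fun i j h => hZc i j ?_⟩, rfl⟩
      exact h.imp (fun hi hmem => hi (hsubIb hmem)) (fun hj hmem => hj (hsubJb hmem))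
    apply le_antisymm
    · exact csSup_le (hne.mono hsub) (by rintro d ⟨Z, _, rfl⟩; exact hangle_le Z)
    · calc Real.pi / 2 = sSup {d : ℝ | ∃ Z, BlockCorrupt X Z k l ∧
          d = canonAngle (U Z) (U X)} := hb.symm
        _ ≤ _ := csSup_le_csSup (hbdd _ _) hne hsub
  -- no breakdown at (0, 1)
  have hnot0 : ¬ BreaksDownBlock U X 0 1 := by
    rw [BreaksDownBlock]
    have hSet : {d : ℝ | ∃ Z, BlockCorrupt X Z 0 1 ∧ d = canonAngle (U Z) (U X)}
        = {canonAngle (U X) (U X)} := by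
      ext d
      constructor
      · rintro ⟨Z, ⟨I', J', hI', hJ', hZ⟩, rfl⟩
        have hIe : I' = ∅ := Finset.card_eq_zero.mp hI'
        have hZX : Z = X := by
          funext i j
          exact hZ i j (Or.inl (by rw [hIe]; exact Finset.notMem_empty i))
        rw [hZX]
        rfl
      · rintro rfl
        exact ⟨X, hXself 0 1 (by omega) hp1, rfl⟩
    rw [hSet, csSup_singleton, canonAngle_self _ hUXunit]
    intro h
    linarith [Real.pi_pos]
  -- the minimal breakdown row-block size
  have hbne : {k : ℕ | BreaksDownBlock U X k 1}.Nonempty := ⟨R + 1, hBR1⟩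
  set kk : ℕ := sInf {k : ℕ | BreaksDownBlock U X k 1} with hkkdef
  have hkkmem : BreaksDownBlock U X kk 1 := Nat.sInf_mem hbne
  have hkkle : kk ≤ R + 1 := Nat.sInf_le hBR1
  have hkk1 : 1 ≤ kk := by
    rcases Nat.eq_zero_or_pos kk with h0 | h
    · rw [h0] at hkkmem; exact absurd hkkmem hnot0
    · exact h
  have hkkn : kk ≤ n := le_trans hkkle hRn'
  refine ⟨⟨kk, hkkle, hkk1, hkkn, le_refl 1, hp1, ?_, ?_⟩, ?_, ?_⟩
  · intro k l hk hkn hl hlp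
    exact hmono kk 1 k l hkkmem hk hkn hl hlp
  · intro k l hk1 hl1 hkkk hl1' hne
    have hl : l = 1 := le_antisymm hl1' hl1
    subst hl
    have hklt : k < kk := lt_of_le_of_ne hkkk (fun h => hne (by rw [h]))
    intro hbk
    have : kk ≤ k := Nat.sInf_le (show k ∈ {k : ℕ | BreaksDownBlock U X k 1} from hbk)
    omega
  · -- bpRow ≤ R + 1
    apply Nat.sInf_le
    refine ⟨by omega, hRn', ?_⟩
    rw [BreaksDownRow]
    have hEq : {d : ℝ | ∃ Z, RowCorrupt X Z (R+1) ∧ d = canonAngle (U Z) (U X)}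
        = {d : ℝ | ∃ Z, BlockCorrupt X Z (R+1) p ∧ d = canonAngle (U Z) (U X)} := by
      ext d
      constructor
      · rintro ⟨Z, ⟨I', hI', hZ⟩, rfl⟩
        refine ⟨Z, ⟨I', Finset.univ, hI', by rw [Finset.card_univ, Fintype.card_fin], ?_⟩, rfl⟩
        rintro i j (hi | hj)
        · exact hZ i hi j
        · exact absurd (Finset.mem_univ j) hj
      · rintro ⟨Z, ⟨I', J', hI', hJ', hZ⟩, rfl⟩
        exact ⟨Z, ⟨I', hI', fun i hi j => hZ i j (Or.inl hi)⟩, rfl⟩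
    rw [hEq]
    exact hmono kk 1 (R+1) p hkkmem hkkle hRn' hp1 le_rfl
  · -- bpCol = 1
    have hcol : BreaksDownCol U X 1 := by
      rw [BreaksDownCol]
      have hEq : {d : ℝ | ∃ Z, ColCorrupt X Z 1 ∧ d = canonAngle (U Z) (U X)}
          = {d : ℝ | ∃ Z, BlockCorrupt X Z n 1 ∧ d = canonAngle (U Z) (U X)} := by
        ext d
        constructor
        · rintro ⟨Z, ⟨J', hJ', hZ⟩, rfl⟩
          refine ⟨Z, ⟨Finset.univ, J', by rw [Finset.card_univ, Fintype.card_fin], hJ', ?_⟩, rfl⟩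
          rintro i j (hi | hj)
          · exact absurd (Finset.mem_univ i) hi
          · exact hZ j hj i
        · rintro ⟨Z, ⟨I', J', hI', hJ', hZ⟩, rfl⟩
          exact ⟨Z, ⟨J', hJ', fun j hj i => hZ i j (Or.inr hj)⟩, rfl⟩
      rw [hEq]
      exact hmono kk 1 n 1 hkkmem hkkn le_rfl le_rfl hp1
    have h1mem : 1 ∈ {l : ℕ | 1 ≤ l ∧ l ≤ p ∧ BreaksDownCol U X l} := ⟨le_rfl, hp1, hcol⟩
    have hle : bpCol U X ≤ 1 := Nat.sInf_le h1mem
    have hge : 1 ≤ bpCol U X := (Nat.sInf_mem (⟨1, h1mem⟩ :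
      {l : ℕ | 1 ≤ l ∧ l ≤ p ∧ BreaksDownCol U X l}.Nonempty)).1
    omega
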